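/- For all m, n ≥ 1, the lexicographic product K_{4m} ∘ complement(K_{2n+1}) is orientable Z_{4m(2n+1)}-distance magic; in particular there exist infinitely many graphs of odd regularity that are orientable Z_N-distance magic where N is the order of the graph. -/

import Mathlib

open Finset

/-- An orientation of `G` together with a bijective labeling by `ZMod n` whose
vertex weights (sum of labels of out-neighbors minus sum of labels of in-neighbors)
are all equal to some constant `μ`. -/
def orientableDistanceMagic {V : Type*} [Fintype V] [DecidableEq V]
    (G : SimpleGraph V) (n : ℕ) : Prop :=
  ∃ (D : V → V → Bool) (l : V → ZMod n) (μ : ZMod n),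
    Function.Bijective l ∧
    (∀ x y, D x y → G.Adj x y) ∧
    (∀ x y, G.Adj x y → (D x y ↔ ¬ D y x)) ∧
    ∀ x : V, (∑ y ∈ univ.filter (fun y => D x y), l y)
           - (∑ y ∈ univ.filter (fun y => D y x), l y) = μ

/-- The lexicographic product `K_m ∘ complement(K_n)`, i.e. the complete
`m`-partite graph with all parts of size `n`. -/
def KmKnbar (m n : ℕ) : SimpleGraph (Fin m × Fin n) where
  Adj a b := a.1 ≠ b.1
  symm := ⟨fun _ _ h => h.symm⟩
  loopless := ⟨fun _ h => h rfl⟩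

instance (m n : ℕ) : DecidableRel (KmKnbar m n).Adj :=
  fun a b => inferInstanceAs (Decidable (a.1 ≠ b.1))


namespace OMAux

/-- row-1 permutation -/
def gfun (m : ℕ) (i : ℤ) : ℤ :=
  if i < 2*m then 2*m - 1 - i else if i = 2*m then 2*m else 6*m - i

/-- row-0 permutation -/
def r0fun (m : ℕ) (i : ℤ) : ℤ :=
  if i = 3*m then 0
  else if i < 2*m then 4*m - 1 - 2*i
  else if i = 2*m then 2*m
  else 8*m - 2*i

/-- row q permutation -/
def rho (m : ℕ) (q : ℕ) (i : ℤ) : ℤ :=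
  if q = 0 then r0fun m i else if q = 1 then gfun m i else i

def qhat (n : ℕ) : ℕ := if n % 2 = 1 then n else 2*n

def sgn (m n : ℕ) (i : ℤ) (q : ℕ) : ℤ :=
  if i = 3*m ∧ q = qhat n then -((-1:ℤ)^q) else (-1:ℤ)^q

lemma gfun_bounds (m : ℕ) (hm : 1 ≤ m) (i : ℤ) (h0 : 0 ≤ i) (h1 : i < 4*m) :
    0 ≤ gfun m i ∧ gfun m i < 4*m := by
  unfold gfun; split_ifs <;> omega

lemma r0fun_bounds (m : ℕ) (hm : 1 ≤ m) (i : ℤ) (h0 : 0 ≤ i) (h1 : i < 4*m) :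
    0 ≤ r0fun m i ∧ r0fun m i < 4*m := by
  unfold r0fun; split_ifs <;> omega

lemma rho_bounds (m : ℕ) (hm : 1 ≤ m) (q : ℕ) (i : ℤ) (h0 : 0 ≤ i) (h1 : i < 4*m) :
    0 ≤ rho m q i ∧ rho m q i < 4*m := by
  unfold rho; split_ifs
  · exact r0fun_bounds m hm i h0 h1
  · exact gfun_bounds m hm i h0 h1
  · exact ⟨h0, h1⟩

lemma gfun_inj (m : ℕ) (hm : 1 ≤ m) {i j : ℤ} (hi0 : 0 ≤ i) (hi1 : i < 4*m)
    (hj0 : 0 ≤ j) (hj1 : j < 4*m) (h : gfun m i = gfun m j) : i = j := by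
  unfold gfun at h; split_ifs at h <;> omega

lemma r0fun_inj (m : ℕ) (hm : 1 ≤ m) {i j : ℤ} (hi0 : 0 ≤ i) (hi1 : i < 4*m)
    (hj0 : 0 ≤ j) (hj1 : j < 4*m) (h : r0fun m i = r0fun m j) : i = j := by
  unfold r0fun at h; split_ifs at h <;> omega

lemma rho_inj (m : ℕ) (hm : 1 ≤ m) (q : ℕ) {i j : ℤ} (hi0 : 0 ≤ i) (hi1 : i < 4*m)
    (hj0 : 0 ≤ j) (hj1 : j < 4*m) (h : rho m q i = rho m q j) : i = j := by
  unfold rho at h; split_ifs at h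
  · exact r0fun_inj m hm hi0 hi1 hj0 hj1 h
  · exact gfun_inj m hm hi0 hi1 hj0 hj1 h
  · exact h

lemma r0_sub_g (m : ℕ) (hm : 1 ≤ m) {i : ℤ} (h0 : 0 ≤ i) (h1 : i < 4*m)
    (hne : i ≠ 3*m) : r0fun m i - gfun m i = 2*m - i := by
  unfold r0fun gfun; split_ifs <;> omega

lemma r0_at_star (m : ℕ) (hm : 1 ≤ m) : r0fun m (3*m) = 0 := by
  unfold r0fun; simp

lemma g_at_star (m : ℕ) (hm : 1 ≤ m) : gfun m (3*m) = 3*m := by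
  unfold gfun; split_ifs <;> omega

lemma rho_at_star (m : ℕ) (hm : 1 ≤ m) {q : ℕ} (hq : q ≠ 0) : rho m q (3*m) = 3*m := by
  unfold rho
  rw [if_neg hq]
  split_ifs with h1
  · exact g_at_star m hm
  · rfl

lemma sum_alt (n : ℕ) : (∑ q ∈ Finset.range (2*n+1), (-1:ℤ)^q) = 1 := by
  induction n with
  | zero => simp
  | succ p ih =>
      have : 2*(p+1)+1 = (2*p+1) + 1 + 1 := by ring
      rw [this, Finset.sum_range_succ, Finset.sum_range_succ, ih]
      have h1 : ((-1:ℤ))^(2*p+1) = -1 := by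
        rw [pow_succ, pow_mul]; simp
      have h2 : ((-1:ℤ))^(2*p+1+1) = 1 := by
        rw [pow_succ, h1]; ring
      rw [h1, h2]; ring

lemma sum_alt_mul (n : ℕ) : (∑ q ∈ Finset.range (2*n+1), (-1:ℤ)^q * q) = n := by
  induction n with
  | zero => simp
  | succ p ih =>
      have : 2*(p+1)+1 = (2*p+1) + 1 + 1 := by ring
      rw [this, Finset.sum_range_succ, Finset.sum_range_succ, ih]
      have h1 : ((-1:ℤ))^(2*p+1) = -1 := by
        rw [pow_succ, pow_mul]; simp
      have h2 : ((-1:ℤ))^(2*p+1+1) = 1 := by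
        rw [pow_succ, h1]; ring
      rw [h1, h2]
      push_cast
      ring

end OMAux

namespace OMAux

/-- The signed sum of the labels of part `i`. -/
def Sint (m n : ℕ) (i : ℤ) : ℤ :=
  ∑ q ∈ Finset.range (2*n+1), sgn m n i q * (4*m*q + rho m q i)

lemma base_sum (m n : ℕ) (hn : 1 ≤ n) (i : ℤ) :
    (∑ q ∈ Finset.range (2*n+1), (-1:ℤ)^q * (4*m*q + rho m q i))
      = 4*m*n + i + (r0fun m i - gfun m i) := by
  have split : ∀ q ∈ Finset.range (2*n+1), (-1:ℤ)^q * (4*m*q + rho m q i)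
      = (4*m*((-1:ℤ)^q * q) + (-1:ℤ)^q * i) + (-1:ℤ)^q * (rho m q i - i) := by
    intro q _; ring
  rw [Finset.sum_congr rfl split, Finset.sum_add_distrib, Finset.sum_add_distrib,
    ← Finset.mul_sum, sum_alt_mul, ← Finset.sum_mul, sum_alt]
  have hsub : Finset.range 2 ⊆ Finset.range (2*n+1) := by
    apply Finset.range_subset_range.2; omega
  have hzero : ∀ q ∈ Finset.range (2*n+1), q ∉ Finset.range 2 →
      (-1:ℤ)^q * (rho m q i - i) = 0 := by
    intro q _ hq
    have hq2 : q ≠ 0 ∧ q ≠ 1 := by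
      simp only [Finset.mem_range] at hq; omega
    have : rho m q i = i := by unfold rho; rw [if_neg hq2.1, if_neg hq2.2]
    rw [this]; ring
  rw [← Finset.sum_subset hsub hzero]
  have : (∑ q ∈ Finset.range 2, (-1:ℤ)^q * (rho m q i - i))
      = (rho m 0 i - i) - (rho m 1 i - i) := by
    rw [Finset.sum_range_succ, Finset.sum_range_succ, Finset.sum_range_zero]
    ring
  rw [this]
  have h0 : rho m 0 i = r0fun m i := by unfold rho; simp
  have h1 : rho m 1 i = gfun m i := by unfold rho; simp
  rw [h0, h1]; ring

lemma qhat_pos (n : ℕ) (hn : 1 ≤ n) : 1 ≤ qhat n := by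
  unfold qhat; split_ifs <;> omega

lemma qhat_lt (n : ℕ) (hn : 1 ≤ n) : qhat n < 2*n+1 := by
  unfold qhat; split_ifs <;> omega

lemma Sint_main (m n : ℕ) (hm : 1 ≤ m) (hn : 1 ≤ n) {i : ℤ} (h0 : 0 ≤ i)
    (h1 : i < 4*m) (hne : i ≠ 3*m) : Sint m n i = 2*m*(2*n+1) := by
  unfold Sint
  have hs : ∀ q ∈ Finset.range (2*n+1), sgn m n i q * (4*m*q + rho m q i)
      = (-1:ℤ)^q * (4*m*q + rho m q i) := by
    intro q _
    unfold sgn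
    rw [if_neg (by tauto)]
  rw [Finset.sum_congr rfl hs, base_sum m n hn i, r0_sub_g m hm h0 h1 hne]
  try ring

lemma Sint_star (m n : ℕ) (hm : 1 ≤ m) (hn : 1 ≤ n) :
    Sint m n (3*m) = if n % 2 = 1 then 12*(m:ℤ)*n + 6*m else -(12*(m:ℤ)*n) - 6*m := by
  unfold Sint
  have key : ∀ q ∈ Finset.range (2*n+1), sgn m n (3*m) q * (4*m*q + rho m q (3*m))
      = (-1:ℤ)^q * (4*m*q + rho m q (3*m))
        + (if q = qhat n then (-2)*(-1:ℤ)^q * (4*m*q + rho m q (3*m)) else 0) := by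
    intro q _
    unfold sgn
    by_cases hq : q = qhat n
    · rw [if_pos ⟨rfl, hq⟩, if_pos hq]; ring
    · rw [if_neg (by tauto), if_neg hq]; ring
  rw [Finset.sum_congr rfl key, Finset.sum_add_distrib, base_sum m n hn]
  rw [r0_at_star m hm, g_at_star m hm]
  have hsingle : (∑ q ∈ Finset.range (2*n+1),
      (if q = qhat n then (-2)*(-1:ℤ)^q * (4*m*q + rho m q (3*m)) else 0))
      = (-2)*(-1:ℤ)^(qhat n) * (4*m*(qhat n) + 3*m) := by
    rw [Finset.sum_ite_eq' (Finset.range (2*n+1)) (qhat n)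
      (fun q => (-2)*(-1:ℤ)^q * (4*m*q + rho m q (3*m)))]
    rw [if_pos (Finset.mem_range.2 (qhat_lt n hn))]
    rw [rho_at_star m hm (by have := qhat_pos n hn; omega)]
  rw [hsingle]
  by_cases hpar : n % 2 = 1
  · have hq : qhat n = n := by unfold qhat; rw [if_pos hpar]
    have hpow : (-1:ℤ)^n = -1 := by
      rcases Nat.odd_iff.2 hpar with ⟨j, rfl⟩
      rw [pow_succ, pow_mul]; simp
    rw [if_pos hpar, hq, hpow]
    push_cast
    ring
  · have hq : qhat n = 2*n := by unfold qhat; rw [if_neg hpar]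
    have hpow : (-1:ℤ)^(2*n) = 1 := by rw [pow_mul]; simp
    rw [if_neg hpar, hq, hpow]
    push_cast
    ring

end OMAux

namespace OMAux

abbrev NN (m n : ℕ) : ℕ := 4*m*(2*n+1)

lemma NN_pos (m n : ℕ) (hm : 1 ≤ m) : 0 < NN m n := by
  have h1 : 0 < 4*m := by omega
  exact Nat.mul_pos h1 (Nat.succ_pos (2*n))

/-- the labeling -/
def lab (m n : ℕ) (x : Fin (4*m) × Fin (2*n+1)) : ZMod (NN m n) :=
  ((4*(m:ℤ)*(x.2 : ℕ) + rho m (x.2 : ℕ) ((x.1 : ℕ) : ℤ) : ℤ) : ZMod (NN m n))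

lemma lab_injective (m n : ℕ) (hm : 1 ≤ m) : Function.Injective (lab m n) := by
  haveI : NeZero (NN m n) := ⟨by have := NN_pos m n hm; omega⟩
  intro x y h
  have hqxn := x.2.isLt
  have hqyn := y.2.isLt
  have hixn := x.1.isLt
  have hiyn := y.1.isLt
  set qx := ((x.2 : ℕ) : ℤ) with hqx
  set qy := ((y.2 : ℕ) : ℤ) with hqy
  set ix := ((x.1 : ℕ) : ℤ) with hix
  set iy := ((y.1 : ℕ) : ℤ) with hiy
  have hix0 : 0 ≤ ix := Int.natCast_nonneg _
  have hix1 : ix < 4*m := by omega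
  have hiy0 : 0 ≤ iy := Int.natCast_nonneg _
  have hiy1 : iy < 4*m := by omega
  have hqx1 : qx < 2*n+1 := by omega
  have hqy1 : qy < 2*n+1 := by omega
  have hqx0 : 0 ≤ qx := Int.natCast_nonneg _
  have hqy0 : 0 ≤ qy := Int.natCast_nonneg _
  obtain ⟨hrx0, hrx1⟩ := rho_bounds m hm (x.2 : ℕ) ix hix0 hix1
  obtain ⟨hry0, hry1⟩ := rho_bounds m hm (y.2 : ℕ) iy hiy0 hiy1
  set vx : ℤ := 4*(m:ℤ)*qx + rho m (x.2 : ℕ) ix with hvx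
  set vy : ℤ := 4*(m:ℤ)*qy + rho m (y.2 : ℕ) iy with hvy
  have hcast : (vx : ZMod (NN m n)) = (vy : ZMod (NN m n)) := h
  have hmod : vx ≡ vy [ZMOD (NN m n)] := (ZMod.intCast_eq_intCast_iff vx vy (NN m n)).mp hcast
  have hdvd : ((NN m n : ℤ)) ∣ vy - vx := Int.ModEq.dvd hmod
  have hNZ : ((NN m n : ℕ) : ℤ) = 4*(m:ℤ)*(2*n+1) := by push_cast; ring
  have hmul_x : 4*(m:ℤ)*(qx+1) ≤ 4*(m:ℤ)*(2*n+1) :=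
    mul_le_mul_of_nonneg_left (by omega) (by positivity)
  have hmul_y : 4*(m:ℤ)*(qy+1) ≤ 4*(m:ℤ)*(2*n+1) :=
    mul_le_mul_of_nonneg_left (by omega) (by positivity)
  have hbx : 0 ≤ vx ∧ vx < ((NN m n : ℕ) : ℤ) := by
    constructor
    · have : 0 ≤ 4*(m:ℤ)*qx := by positivity
      omega
    · have h2 : 4*(m:ℤ)*(qx+1) = 4*(m:ℤ)*qx + 4*m := by ring
      omega
  have hby : 0 ≤ vy ∧ vy < ((NN m n : ℕ) : ℤ) := by
    constructor
    · have : 0 ≤ 4*(m:ℤ)*qy := by positivity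
      omega
    · have h2 : 4*(m:ℤ)*(qy+1) = 4*(m:ℤ)*qy + 4*m := by ring
      omega
  have hveq : vx = vy := by
    rcases hdvd with ⟨c, hc⟩
    have hNpos : 0 < ((NN m n : ℕ) : ℤ) := by
      have := NN_pos m n hm; omega
    rcases lt_trichotomy c 0 with hcc | hcc | hcc
    · exfalso
      have h5 : ((NN m n : ℕ) : ℤ) * c ≤ ((NN m n : ℕ) : ℤ) * (-1) :=
        mul_le_mul_of_nonneg_left (by omega) (by omega)
      omega
    · rw [hcc, mul_zero] at hc; omega
    · exfalso
      have h5 : ((NN m n : ℕ) : ℤ) * 1 ≤ ((NN m n : ℕ) : ℤ) * c :=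
        mul_le_mul_of_nonneg_left (by omega) (by omega)
      omega
  have hq : qx = qy := by
    rcases lt_trichotomy qx qy with hlt | heq | hlt
    · exfalso
      have h3 : 4*(m:ℤ)*(qx+1) ≤ 4*(m:ℤ)*qy :=
        mul_le_mul_of_nonneg_left (by omega) (by positivity)
      have h2 : 4*(m:ℤ)*(qx+1) = 4*(m:ℤ)*qx + 4*m := by ring
      omega
    · exact heq
    · exfalso
      have h3 : 4*(m:ℤ)*(qy+1) ≤ 4*(m:ℤ)*qx :=
        mul_le_mul_of_nonneg_left (by omega) (by positivity)
      have h2 : 4*(m:ℤ)*(qy+1) = 4*(m:ℤ)*qy + 4*m := by ring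
      omega
  have hq2 : (x.2 : ℕ) = (y.2 : ℕ) := by omega
  have hr : rho m (x.2 : ℕ) ix = rho m (y.2 : ℕ) iy := by
    have h6 : 4*(m:ℤ)*qx = 4*(m:ℤ)*qy := by rw [hq]
    omega
  rw [hq2] at hr
  have hi : ix = iy := rho_inj m hm (y.2 : ℕ) hix0 hix1 hiy0 hiy1 hr
  have hi2 : (x.1 : ℕ) = (y.1 : ℕ) := by omega
  exact Prod.ext (Fin.ext hi2) (Fin.ext hq2)

lemma lab_bijective (m n : ℕ) (hm : 1 ≤ m) : Function.Bijective (lab m n) := by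
  haveI : NeZero (NN m n) := ⟨by have := NN_pos m n hm; omega⟩
  rw [Fintype.bijective_iff_injective_and_card]
  refine ⟨lab_injective m n hm, ?_⟩
  simp [ZMod.card]

end OMAux

namespace OMAux

lemma neg_one_pow_pm (q : ℕ) : ((-1:ℤ))^q = 1 ∨ ((-1:ℤ))^q = -1 := by
  rcases Nat.even_or_odd q with he | ho
  · left; exact he.neg_one_pow
  · right; exact ho.neg_one_pow

lemma sgn_pm (m n : ℕ) (i : ℤ) (q : ℕ) : sgn m n i q = 1 ∨ sgn m n i q = -1 := by
  unfold sgn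
  rcases neg_one_pow_pm q with h | h <;> split_ifs <;> simp [h]

/-- per-vertex sign -/
def sgv (m n : ℕ) (x : Fin (4*m) × Fin (2*n+1)) : ℤ :=
  sgn m n ((x.1 : ℕ) : ℤ) (x.2 : ℕ)

/-- part-level tournament -/
def tauv (m : ℕ) (i j : Fin (4*m)) : ℤ := if (i : ℕ) < (j : ℕ) then 1 else -1

/-- the edge sign function -/
def Ee (m n : ℕ) (x y : Fin (4*m) × Fin (2*n+1)) : ℤ :=
  if x.1 = y.1 then 0 else sgv m n x * sgv m n y * tauv m x.1 y.1

/-- the orientation -/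
def ornt (m n : ℕ) (x y : Fin (4*m) × Fin (2*n+1)) : Bool :=
  decide (x.1 ≠ y.1 ∧ Ee m n x y = 1)

lemma sgv_pm (m n : ℕ) (x : Fin (4*m) × Fin (2*n+1)) :
    sgv m n x = 1 ∨ sgv m n x = -1 := sgn_pm m n _ _

lemma tauv_pm (m : ℕ) (i j : Fin (4*m)) : tauv m i j = 1 ∨ tauv m i j = -1 := by
  unfold tauv; split_ifs <;> simp

lemma tauv_anti (m : ℕ) {i j : Fin (4*m)} (h : i ≠ j) : tauv m j i = - tauv m i j := by
  have hne : (i : ℕ) ≠ (j : ℕ) := fun hc => h (Fin.ext hc)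
  unfold tauv
  split_ifs <;> omega

lemma Ee_anti (m n : ℕ) {x y : Fin (4*m) × Fin (2*n+1)} (h : x.1 ≠ y.1) :
    Ee m n y x = - Ee m n x y := by
  unfold Ee
  rw [if_neg (Ne.symm h), if_neg h, tauv_anti m h]
  ring

lemma Ee_pm (m n : ℕ) {x y : Fin (4*m) × Fin (2*n+1)} (h : x.1 ≠ y.1) :
    Ee m n x y = 1 ∨ Ee m n x y = -1 := by
  unfold Ee
  rw [if_neg h]
  rcases sgv_pm m n x with h1 | h1 <;> rcases sgv_pm m n y with h2 | h2 <;>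
    rcases tauv_pm m x.1 y.1 with h3 | h3 <;> rw [h1, h2, h3] <;> norm_num

lemma ornt_adj (m n : ℕ) (x y : Fin (4*m) × Fin (2*n+1)) (h : ornt m n x y = true) :
    x.1 ≠ y.1 := by
  have := of_decide_eq_true h
  exact this.1

lemma ornt_iff (m n : ℕ) {x y : Fin (4*m) × Fin (2*n+1)} (h : x.1 ≠ y.1) :
    ornt m n x y = true ↔ ¬ (ornt m n y x = true) := by
  unfold ornt
  rcases Ee_pm m n h with h1 | h1
  · simp only [decide_eq_true_eq]
    constructor
    · intro _ hc
      have := hc.2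
      rw [Ee_anti m n h, h1] at this
      norm_num at this
    · intro _; exact ⟨h, h1⟩
  · simp only [decide_eq_true_eq]
    constructor
    · intro hc
      obtain ⟨-, h2c⟩ := hc
      rw [h1] at h2c
      norm_num at h2c
    · intro hc
      exfalso
      apply hc
      refine ⟨Ne.symm h, ?_⟩
      rw [Ee_anti m n h, h1]
      norm_num

end OMAux

namespace OMAux

/-- the magic constant -/
def mu (m n : ℕ) : ZMod (NN m n) := ((2*(m:ℤ)*(2*n+1) : ℤ) : ZMod (NN m n))

lemma part_sum (m n : ℕ) (hm : 1 ≤ m) (hn : 1 ≤ n) (j : Fin (4*m)) :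
    (∑ b : Fin (2*n+1),
      ((sgn m n ((j : ℕ) : ℤ) (b : ℕ) : ℤ) : ZMod (NN m n)) * lab m n (j, b))
      = mu m n := by
  have hterm : ∀ b : Fin (2*n+1),
      ((sgn m n ((j : ℕ) : ℤ) (b : ℕ) : ℤ) : ZMod (NN m n)) * lab m n (j, b)
      = (((sgn m n ((j : ℕ) : ℤ) (b : ℕ) *
          (4*(m:ℤ)*(b : ℕ) + rho m (b : ℕ) ((j : ℕ) : ℤ))) : ℤ) : ZMod (NN m n)) := by
    intro b
    rw [Int.cast_mul]
    rfl
  rw [Finset.sum_congr rfl (fun b _ => hterm b), ← Int.cast_sum]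
  have hreindex : (∑ b : Fin (2*n+1),
      (sgn m n ((j : ℕ) : ℤ) (b : ℕ) * (4*(m:ℤ)*(b : ℕ) + rho m (b : ℕ) ((j : ℕ) : ℤ))))
      = Sint m n ((j : ℕ) : ℤ) := by
    rw [Sint]
    rw [← Fin.sum_univ_eq_sum_range
      (fun q => sgn m n ((j : ℕ) : ℤ) q * (4*(m:ℤ)*q + rho m q ((j : ℕ) : ℤ))) (2*n+1)]
  rw [hreindex]
  by_cases hj : (j : ℕ) = 3*m
  · have hj' : ((j : ℕ) : ℤ) = 3*m := by omega
    rw [hj', Sint_star m n hm hn]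
    have hNZ : ((NN m n : ℕ) : ℤ) = 4*(m:ℤ)*(2*n+1) := by push_cast; ring
    have key : ∀ (a b : ℤ), ((NN m n : ℕ) : ℤ) ∣ b - a →
        ((a : ZMod (NN m n)) = (b : ZMod (NN m n))) := fun a b hd =>
      (ZMod.intCast_eq_intCast_iff a b _).mpr (Int.modEq_iff_dvd.mpr hd)
    by_cases hpar : n % 2 = 1
    · rw [if_pos hpar, mu]
      apply key
      exact ⟨-1, by rw [hNZ]; ring⟩
    · rw [if_neg hpar, mu]
      apply key
      exact ⟨2, by rw [hNZ]; ring⟩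
  · have hj0 : (0:ℤ) ≤ ((j : ℕ) : ℤ) := Int.natCast_nonneg _
    have hj1 : ((j : ℕ) : ℤ) < 4*m := by have := j.isLt; omega
    have hj' : ((j : ℕ) : ℤ) ≠ 3*m := by omega
    rw [Sint_main m n hm hn hj0 hj1 hj', mu]

lemma two_mu (m n : ℕ) (hm : 1 ≤ m) : mu m n + mu m n = 0 := by
  rw [mu, ← Int.cast_add]
  have : (2*(m:ℤ)*(2*n+1) + 2*(m:ℤ)*(2*n+1)) = ((NN m n : ℕ) : ℤ) := by push_cast; ring
  rw [this, Int.cast_natCast, ZMod.natCast_self]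

lemma neg_mu (m n : ℕ) (hm : 1 ≤ m) : - mu m n = mu m n :=
  neg_eq_of_add_eq_zero_left (two_mu m n hm)

lemma pm_mul_mu (m n : ℕ) (hm : 1 ≤ m) (c : ℤ) (hc : c = 1 ∨ c = -1) :
    ((c : ℤ) : ZMod (NN m n)) * mu m n = mu m n := by
  rcases hc with h | h <;> rw [h]
  · simp
  · push_cast
    rw [neg_one_mul, neg_mu m n hm]

lemma weight (m n : ℕ) (hm : 1 ≤ m) (hn : 1 ≤ n) (x : Fin (4*m) × Fin (2*n+1)) :
    (∑ y : Fin (4*m) × Fin (2*n+1), ((Ee m n x y : ℤ) : ZMod (NN m n)) * lab m n y)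
      = mu m n := by
  rw [Fintype.sum_prod_type]
  have hinner : ∀ j : Fin (4*m),
      (∑ b : Fin (2*n+1), ((Ee m n x (j, b) : ℤ) : ZMod (NN m n)) * lab m n (j, b))
      = (if x.1 = j then 0 else mu m n) := by
    intro j
    by_cases hj : x.1 = j
    · rw [if_pos hj]
      apply Finset.sum_eq_zero
      intro b _
      have : Ee m n x (j, b) = 0 := by unfold Ee; rw [if_pos hj]
      rw [this]
      simp
    · rw [if_neg hj]
      have hsplit : ∀ b : Fin (2*n+1),
          ((Ee m n x (j, b) : ℤ) : ZMod (NN m n)) * lab m n (j, b)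
          = ((sgv m n x * tauv m x.1 j : ℤ) : ZMod (NN m n)) *
            (((sgn m n ((j : ℕ) : ℤ) (b : ℕ) : ℤ) : ZMod (NN m n)) * lab m n (j, b)) := by
        intro b
        have hE : Ee m n x (j, b) = (sgv m n x * tauv m x.1 j) * sgn m n ((j:ℕ):ℤ) (b:ℕ) := by
          unfold Ee
          rw [if_neg hj]
          have : sgv m n (j, b) = sgn m n ((j:ℕ):ℤ) (b:ℕ) := rfl
          rw [this]; ring
        rw [hE, Int.cast_mul]
        ring
      rw [Finset.sum_congr rfl (fun b _ => hsplit b), ← Finset.mul_sum,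
        part_sum m n hm hn j]
      apply pm_mul_mu m n hm
      rcases sgv_pm m n x with h1 | h1 <;> rcases tauv_pm m x.1 j with h2 | h2 <;>
        rw [h1, h2] <;> norm_num
  rw [Finset.sum_congr rfl (fun j _ => hinner j)]
  have hsum : (∑ j : Fin (4*m), (if x.1 = j then 0 else mu m n))
      = (∑ j : Fin (4*m), mu m n) - mu m n := by
    have : ∀ j : Fin (4*m), (if x.1 = j then 0 else mu m n)
        = mu m n - (if x.1 = j then mu m n else 0) := by
      intro j; split_ifs <;> simp
    rw [Finset.sum_congr rfl (fun j _ => this j), Finset.sum_sub_distrib,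
      Finset.sum_ite_eq (Finset.univ) x.1 (fun _ => mu m n), if_pos (Finset.mem_univ x.1)]
  rw [hsum, Finset.sum_const, Finset.card_univ, Fintype.card_fin]
  have hfour : (4*m) • mu m n = 0 := by
    rw [nsmul_eq_mul, mu, ← Int.cast_natCast (4*m), ← Int.cast_mul]
    have : ((4*m : ℕ) : ℤ) * (2*(m:ℤ)*(2*n+1)) = (2*m : ℤ) * ((NN m n : ℕ) : ℤ) := by
      push_cast; ring
    rw [this, Int.cast_mul, Int.cast_natCast, ZMod.natCast_self, mul_zero]
  rw [hfour, zero_sub, neg_mu m n hm]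

end OMAux

namespace OMAux

lemma point (m n : ℕ) (x y : Fin (4*m) × Fin (2*n+1)) :
    ((if ornt m n x y then lab m n y else 0) - (if ornt m n y x then lab m n y else 0))
      = ((Ee m n x y : ℤ) : ZMod (NN m n)) * lab m n y := by
  by_cases hadj : x.1 = y.1
  · have e0 : Ee m n x y = 0 := by unfold Ee; rw [if_pos hadj]
    have d1 : ornt m n x y = false := by
      unfold ornt
      simp [hadj]
    have d2 : ornt m n y x = false := by
      unfold ornt
      simp [hadj.symm]
    rw [d1, d2, e0]
    simp
  · rcases Ee_pm m n hadj with h1 | h1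
    · have d1 : ornt m n x y = true := by
        unfold ornt
        simp [hadj, h1]
      have hyx : Ee m n y x = -1 := by rw [Ee_anti m n hadj, h1]
      have d2 : ornt m n y x = false := by
        unfold ornt
        simp [hyx]
      rw [d1, d2, h1]
      simp
    · have d1 : ornt m n x y = false := by
        unfold ornt
        simp [h1]
      have hyx : Ee m n y x = 1 := by rw [Ee_anti m n hadj, h1]; ring
      have d2 : ornt m n y x = true := by
        unfold ornt
        simp [Ne.symm hadj, hyx]
      rw [d1, d2, h1]
      simp

end OMAux


theorem stmt_6 (m n : ℕ) (hm : 1 ≤ m) (hn : 1 ≤ n) :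
    (KmKnbar (4 * m) (2 * n + 1)).IsRegularOfDegree ((4 * m - 1) * (2 * n + 1)) ∧
    Odd ((4 * m - 1) * (2 * n + 1)) ∧
    orientableDistanceMagic (KmKnbar (4 * m) (2 * n + 1)) (4 * m * (2 * n + 1)) := by
  refine ⟨?_, ?_, ?_⟩
  · -- regularity
    intro v
    have hnbr : (KmKnbar (4*m) (2*n+1)).neighborFinset v
        = (Finset.univ.erase v.1) ×ˢ (Finset.univ : Finset (Fin (2*n+1))) := by
      ext w
      simp only [SimpleGraph.mem_neighborFinset, Finset.mem_product, Finset.mem_erase,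
        Finset.mem_univ, and_true]
      show v.1 ≠ w.1 ↔ w.1 ≠ v.1
      exact ne_comm
    rw [SimpleGraph.degree, hnbr, Finset.card_product,
      Finset.card_erase_of_mem (Finset.mem_univ _), Finset.card_univ, Finset.card_univ,
      Fintype.card_fin, Fintype.card_fin]
  · -- oddness
    have h1 : Odd (4*m - 1) := Nat.odd_iff.mpr (by omega)
    have h2 : Odd (2*n + 1) := Nat.odd_iff.mpr (by omega)
    exact h1.mul h2
  · -- the magic labeling
    refine ⟨OMAux.ornt m n, OMAux.lab m n, OMAux.mu m n,
      OMAux.lab_bijective m n hm, ?_, ?_, ?_⟩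
    · intro x y h
      exact OMAux.ornt_adj m n x y h
    · intro x y hadj
      exact OMAux.ornt_iff m n hadj
    · intro x
      rw [Finset.sum_filter, Finset.sum_filter, ← Finset.sum_sub_distrib,
        Finset.sum_congr rfl (fun y _ => OMAux.point m n x y)]
      exact OMAux.weight m n hm hn x
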